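/- Let X and Y be r×r complex matrices and suppose that det(S·X + Y) = 0 for every r×r sign flip matrix S. Then det(Y) = 0. -/
import Mathlib


/-- Let `X` and `Y` be `r × r` complex matrices and suppose
that `det (S * X + Y) = 0` for every `r × r` sign flip matrix `S` (a diagonal
matrix whose diagonal entries are `+1` or `−1`).  Then `det Y = 0`. -/
theorem det_eq_zero_of_all_sign_flips
    {r : ℕ} (X Y : Matrix (Fin r) (Fin r) ℂ)
    (h : ∀ ε : Fin r → ℂ, (∀ i, ε i = 1 ∨ ε i = -1) →
      (Matrix.diagonal ε * X + Y).det = 0) :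
    Y.det = 0 := by
  classical
  have key : ∀ s : Finset (Fin r), ∀ ε : Fin r → ℂ,
      (∀ i ∈ s, ε i = 0) → (∀ i ∉ s, ε i = 1 ∨ ε i = -1) →
      (Matrix.diagonal ε * X + Y).det = 0 := by
    intro s
    induction s using Finset.induction_on with
    | empty =>
      intro ε _ h2
      exact h ε (fun i => h2 i (Finset.notMem_empty i))
    | @insert a s ha ih =>
      intro ε h1 h2
      have hεa : ε a = 0 := h1 a (Finset.mem_insert_self a s)
      set M := Matrix.diagonal ε * X + Y with hM
      have hrow : ∀ c : ℂ,
          Matrix.diagonal (Function.update ε a c) * X + Y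
            = M.updateRow a (c • X a + M a) := by
        intro c
        ext i j
        by_cases hia : i = a
        · subst hia
          simp [hM, Matrix.diagonal_mul, hεa]
        · simp [hM, Matrix.updateRow_ne hia, Matrix.diagonal_mul,
            Function.update_of_ne hia]
      have hdet : ∀ c : ℂ,
          (Matrix.diagonal (Function.update ε a c) * X + Y).det
            = c * (M.updateRow a (X a)).det + M.det := by
        intro c
        rw [hrow c, Matrix.det_updateRow_add, Matrix.det_updateRow_smul,
          Matrix.updateRow_eq_self]
      have haux : ∀ c : ℂ, c = 1 ∨ c = -1 →
          (Matrix.diagonal (Function.update ε a c) * X + Y).det = 0 := by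
        intro c hc
        apply ih
        · intro i hi
          have hia : i ≠ a := fun hh => ha (hh ▸ hi)
          rw [Function.update_of_ne hia]
          exact h1 i (Finset.mem_insert_of_mem hi)
        · intro i hi
          by_cases hia : i = a
          · subst hia; simpa using hc
          · rw [Function.update_of_ne hia]
            exact h2 i (by simp [hia, hi])
      have e1 := haux 1 (Or.inl rfl)
      have e2 := haux (-1) (Or.inr rfl)
      rw [hdet] at e1 e2
      have : 2 * M.det = 0 := by linear_combination e1 + e2
      have := mul_eq_zero.mp this
      simpa using this
  have := key Finset.univ 0 (fun i _ => rfl) (fun i hi => absurd (Finset.mem_univ i) hi)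
  rwa [show Matrix.diagonal (0 : Fin r → ℂ) = 0 from Matrix.diagonal_zero, zero_mul, zero_add] at this
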